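/- Let σ: (ℂ^×)² → (ℂ^×)² be the involution σ(m,l) = (m^{-1}, l^{-1}). Suppose W ⊆ (ℂ^×)² is a σ-invariant set, and let P ∈ ℂ[m,l] generate the (principal) ideal of all polynomials in ℂ[m,l] vanishing on the Zariski closure of W in ℂ². Then P is balanced: σ(P) = δ m^a l^b P in ℂ[m^{±1}, l^{±1}] for some δ ∈ {±1} and integers a, b. -/

import Mathlib

open MvPolynomial

/-- A polynomial vanishing on the torus (ℂ×)² is zero. -/
lemma aux_zero (q : MvPolynomial (Fin 2) ℂ)
    (h : ∀ x y : ℂ, x ≠ 0 → y ≠ 0 → eval ![x, y] q = 0) : q = 0 := by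
  have hXq : (X 0 * X 1 * q : MvPolynomial (Fin 2) ℂ) = 0 := by
    apply MvPolynomial.funext
    intro f
    have hf : ![f 0, f 1] = f := by
      funext i; fin_cases i <;> simp
    rw [map_mul, map_mul, eval_X, eval_X, map_zero]
    by_cases h0 : f 0 = 0
    · rw [h0]; ring
    by_cases h1 : f 1 = 0
    · rw [h1]; ring
    rw [← hf] at *
    rw [h (f 0) (f 1) h0 h1]
    ring
  have hX : (X 0 * X 1 : MvPolynomial (Fin 2) ℂ) ≠ 0 :=
    mul_ne_zero (X_ne_zero 0) (X_ne_zero 1)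
  rcases mul_eq_zero.mp hXq with h' | h'
  · exact absurd h' hX
  · exact h'

/-- Reversal of a 2-variable polynomial with respect to degree `N`. -/
noncomputable def rev (N : ℕ) (p : MvPolynomial (Fin 2) ℂ) : MvPolynomial (Fin 2) ℂ :=
  ∑ d ∈ p.support, monomial (Finsupp.equivFunOnFinite.symm ![N - d 0, N - d 1]) (coeff d p)

lemma support_rev (N : ℕ) (p : MvPolynomial (Fin 2) ℂ) :
    ∀ d ∈ (rev N p).support, d 0 ≤ N ∧ d 1 ≤ N := by
  intro d hd
  have hne : coeff d (rev N p) ≠ 0 := mem_support_iff.mp hd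
  rw [rev, coeff_sum] at hne
  obtain ⟨k, _, hk⟩ := Finset.exists_ne_zero_of_sum_ne_zero hne
  rw [coeff_monomial] at hk
  split_ifs at hk with he
  · rw [← he]
    constructor <;> simp [Nat.sub_le]
  · exact absurd rfl hk

lemma eval_rev (N : ℕ) (p : MvPolynomial (Fin 2) ℂ)
    (hb : ∀ d ∈ p.support, d 0 ≤ N ∧ d 1 ≤ N)
    (x y : ℂ) (hx : x ≠ 0) (hy : y ≠ 0) :
    eval ![x, y] (rev N p) = x ^ N * y ^ N * eval ![x⁻¹, y⁻¹] p := by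
  rw [rev, map_sum, eval_eq' (![x⁻¹, y⁻¹]) p, Finset.mul_sum]
  apply Finset.sum_congr rfl
  intro d hd
  obtain ⟨h0, h1⟩ := hb d hd
  rw [eval_monomial, Finsupp.prod_fintype _ _ (fun i => pow_zero _)]
  have hcoe : ∀ i : Fin 2, (Finsupp.equivFunOnFinite.symm ![N - d 0, N - d 1]) i
      = ![N - d 0, N - d 1] i := fun i => rfl
  rw [Fin.prod_univ_two, Fin.prod_univ_two, hcoe 0, hcoe 1]
  simp only [Matrix.cons_val_zero, Matrix.cons_val_one, Matrix.head_cons]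
  rw [pow_sub₀ x hx h0, pow_sub₀ y hy h1, inv_pow, inv_pow]
  ring

lemma prime_X0 : Prime (X 0 : MvPolynomial (Fin 2) ℂ) := by
  rw [← MulEquiv.prime_iff (p := (X 0 : MvPolynomial (Fin 2) ℂ)) (MvPolynomial.finSuccEquiv ℂ 1)]
  show Prime (MvPolynomial.finSuccEquiv ℂ 1 (X 0))
  rw [finSuccEquiv_X_zero]
  exact Polynomial.prime_X

lemma prime_X0' : Prime (X 0 : MvPolynomial (Fin 1) ℂ) := by
  rw [← MulEquiv.prime_iff (p := (X 0 : MvPolynomial (Fin 1) ℂ)) (MvPolynomial.finSuccEquiv ℂ 0)]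
  show Prime (MvPolynomial.finSuccEquiv ℂ 0 (X 0))
  rw [finSuccEquiv_X_zero]
  exact Polynomial.prime_X

lemma prime_X1 : Prime (X 1 : MvPolynomial (Fin 2) ℂ) := by
  rw [← MulEquiv.prime_iff (p := (X 1 : MvPolynomial (Fin 2) ℂ)) (MvPolynomial.finSuccEquiv ℂ 1)]
  show Prime (MvPolynomial.finSuccEquiv ℂ 1 (X 1))
  have : (1 : Fin 2) = (0 : Fin 1).succ := rfl
  rw [this, finSuccEquiv_X_succ, Polynomial.prime_C_iff]
  exact prime_X0'

lemma isUnit_eq_C (e : MvPolynomial (Fin 2) ℂ) (h : IsUnit e) :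
    ∃ δ : ℂ, δ ≠ 0 ∧ e = C δ := by
  have h1 : IsUnit (MvPolynomial.finSuccEquiv ℂ 1 e) := h.map _
  obtain ⟨r, hr, hre⟩ := Polynomial.isUnit_iff.mp h1
  have h2 : IsUnit (MvPolynomial.finSuccEquiv ℂ 0 r) := hr.map _
  obtain ⟨s, hs, hse⟩ := Polynomial.isUnit_iff.mp h2
  obtain ⟨δ, hδ⟩ : ∃ δ : ℂ, s = C δ := ⟨constantCoeff s, (eq_C_of_isEmpty s)⟩
  refine ⟨δ, ?_, ?_⟩
  · intro h0
    rw [h0, map_zero] at hδ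
    rw [hδ] at hs
    exact not_isUnit_zero hs
  · have hψC : MvPolynomial.finSuccEquiv ℂ 0 (C δ) = Polynomial.C (C δ) := by
      simp [finSuccEquiv_apply]
    have hr' : r = C δ := by
      apply (MvPolynomial.finSuccEquiv ℂ 0).injective
      rw [hψC, ← hse, hδ]
    have hφC : MvPolynomial.finSuccEquiv ℂ 1 (C δ) = Polynomial.C (C δ) := by
      simp [finSuccEquiv_apply]
    apply (MvPolynomial.finSuccEquiv ℂ 1).injective
    rw [hφC, ← hre, hr']



lemma unit_of_no_X (e : MvPolynomial (Fin 2) ℂ) (M : ℕ)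
    (hdvd : e ∣ X 0 ^ M * X 1 ^ M) (h0 : ¬ X 0 ∣ e) (h1 : ¬ X 1 ∣ e) : IsUnit e := by
  by_contra hu
  have hne : e ≠ 0 := fun h => h0 (h ▸ dvd_zero _)
  obtain ⟨r, hr_irr, hr_dvd⟩ := WfDvdMonoid.exists_irreducible_factor hu hne
  have hr : Prime r := UniqueFactorizationMonoid.irreducible_iff_prime.mp hr_irr
  rcases hr.2.2 _ _ (hr_dvd.trans hdvd) with h' | h'
  · exact h0 (((hr_irr.associated_of_dvd prime_X0.irreducible
      (hr.dvd_of_dvd_pow h')).symm.dvd).trans hr_dvd)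
  · exact h1 (((hr_irr.associated_of_dvd prime_X1.irreducible
      (hr.dvd_of_dvd_pow h')).symm.dvd).trans hr_dvd)

lemma monomial_structure (c d : MvPolynomial (Fin 2) ℂ) (M : ℕ)
    (h : c * d = X 0 ^ M * X 1 ^ M) :
    ∃ (δ : ℂ) (a b : ℕ), δ ≠ 0 ∧ c = C δ * X 0 ^ a * X 1 ^ b := by
  have hmon : (X 0 ^ M * X 1 ^ M : MvPolynomial (Fin 2) ℂ) ≠ 0 :=
    mul_ne_zero (pow_ne_zero _ (X_ne_zero _)) (pow_ne_zero _ (X_ne_zero _))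
  have hc : c ≠ 0 := fun h0 => hmon (by rw [← h, h0, zero_mul])
  obtain ⟨a, c1, h0c1, rfl⟩ := WfDvdMonoid.max_power_factor hc prime_X0.irreducible
  have hc1 : c1 ≠ 0 := fun h0 => hc (by rw [h0, mul_zero])
  obtain ⟨b, c2, h1c2, rfl⟩ := WfDvdMonoid.max_power_factor hc1 prime_X1.irreducible
  have h0c2 : ¬ X 0 ∣ c2 := fun hd => h0c1 (hd.mul_left _)
  have hdvd : c2 ∣ X 0 ^ M * X 1 ^ M := ⟨X 0 ^ a * X 1 ^ b * d, by rw [← h]; ring⟩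
  obtain ⟨δ, hδ, rfl⟩ := isUnit_eq_C c2 (unit_of_no_X c2 M hdvd h0c2 h1c2)
  exact ⟨δ, a, b, hδ, by ring⟩

/-- If W ⊆ (ℂ^×)² is invariant under σ(m,l) = (m⁻¹, l⁻¹) and P
generates the (principal) ideal of polynomials vanishing on the Zariski closure
of W (equivalently, on W), then P is balanced:
P(m⁻¹, l⁻¹) = δ m^a l^b P(m, l) for some δ = ±1 and integers a, b. -/
theorem stmt7 (W : Set (ℂ × ℂ))
    (hW0 : ∀ p ∈ W, p.1 ≠ 0 ∧ p.2 ≠ 0)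
    (hWσ : ∀ p ∈ W, (p.1⁻¹, p.2⁻¹) ∈ W)
    (P : MvPolynomial (Fin 2) ℂ)
    (hgen : ∀ q : MvPolynomial (Fin 2) ℂ,
      (∀ p ∈ W, eval ![p.1, p.2] q = 0) ↔ q ∈ Ideal.span {P}) :
    ∃ (δ : ℂ) (a b : ℤ), (δ = 1 ∨ δ = -1) ∧
      ∀ x y : ℂˣ, eval ![((x⁻¹ : ℂˣ) : ℂ), ((y⁻¹ : ℂˣ) : ℂ)] P
        = δ * (x : ℂ) ^ a * (y : ℂ) ^ b * eval ![(x : ℂ), (y : ℂ)] P := by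
  by_cases hP : P = 0
  · exact ⟨1, 0, 0, Or.inl rfl, by intro x y; simp [hP]⟩
  have hPvan : ∀ p ∈ W, eval ![p.1, p.2] P = 0 :=
    (hgen P).mpr (Ideal.mem_span_singleton_self P)
  set N : ℕ := max (degreeOf 0 P) (degreeOf 1 P) with hN
  have hPbound : ∀ d ∈ P.support, d 0 ≤ N ∧ d 1 ≤ N := by
    intro d hd
    exact ⟨le_trans (degreeOf_eq_sup 0 P ▸ Finset.le_sup (f := fun m => m 0) hd) (le_max_left _ _),
      le_trans (degreeOf_eq_sup 1 P ▸ Finset.le_sup (f := fun m => m 1) hd) (le_max_right _ _)⟩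
  have hQeval : ∀ x y : ℂ, x ≠ 0 → y ≠ 0 →
      eval ![x, y] (rev N P) = x ^ N * y ^ N * eval ![x⁻¹, y⁻¹] P :=
    fun x y hx hy => eval_rev N P hPbound x y hx hy
  have hQvan : ∀ p ∈ W, eval ![p.1, p.2] (rev N P) = 0 := by
    intro p hp
    obtain ⟨h1, h2⟩ := hW0 p hp
    rw [hQeval _ _ h1 h2]
    have h3 : eval ![p.1⁻¹, p.2⁻¹] P = 0 := hPvan (p.1⁻¹, p.2⁻¹) (hWσ p hp)
    rw [h3]; ring
  obtain ⟨c, hc⟩ := Ideal.mem_span_singleton'.mp ((hgen (rev N P)).mp hQvan)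
  set M : ℕ := max (degreeOf 0 c) (degreeOf 1 c) with hM
  have hcbound : ∀ d ∈ c.support, d 0 ≤ M ∧ d 1 ≤ M := by
    intro d hd
    exact ⟨le_trans (degreeOf_eq_sup 0 c ▸ Finset.le_sup (f := fun m => m 0) hd) (le_max_left _ _),
      le_trans (degreeOf_eq_sup 1 c ▸ Finset.le_sup (f := fun m => m 1) hd) (le_max_right _ _)⟩
  have key : ∀ x y : ℂ, x ≠ 0 → y ≠ 0 →
      eval ![x, y] c * eval ![x⁻¹, y⁻¹] c * eval ![x, y] P = eval ![x, y] P := by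
    intro x y hx hy
    have e1 : eval ![x, y] c * eval ![x, y] P = x ^ N * y ^ N * eval ![x⁻¹, y⁻¹] P := by
      have := hQeval x y hx hy; rw [← hc, map_mul] at this; exact this
    have e2 : eval ![x⁻¹, y⁻¹] c * eval ![x⁻¹, y⁻¹] P
        = (x⁻¹) ^ N * (y⁻¹) ^ N * eval ![x, y] P := by
      have := hQeval x⁻¹ y⁻¹ (inv_ne_zero hx) (inv_ne_zero hy)
      rw [← hc, map_mul, inv_inv, inv_inv] at this; exact this
    rw [inv_pow, inv_pow] at e2
    have e2' : x ^ N * y ^ N * (eval ![x⁻¹, y⁻¹] c * eval ![x⁻¹, y⁻¹] P)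
        = eval ![x, y] P := by
      rw [e2]; field_simp
    linear_combination eval ![x⁻¹, y⁻¹] c * e1 + e2'
  have hkey2 : (c * rev M c - X 0 ^ M * X 1 ^ M) * P = 0 := by
    apply aux_zero
    intro x y hx hy
    rw [map_mul, map_sub, map_mul, map_mul, map_pow, map_pow, eval_X, eval_X,
      eval_rev M c hcbound x y hx hy]
    simp only [Matrix.cons_val_zero, Matrix.cons_val_one, Matrix.head_cons]
    linear_combination (x : ℂ) ^ M * y ^ M * key x y hx hy
  have hprod : c * rev M c = X 0 ^ M * X 1 ^ M := by
    rcases mul_eq_zero.mp hkey2 with h' | h'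
    · exact sub_eq_zero.mp h'
    · exact absurd h' hP
  obtain ⟨δ, a, b, hδ0, hcform⟩ := monomial_structure c (rev M c) M hprod
  have hevalc : ∀ x y : ℂ, eval ![x, y] c = δ * x ^ a * y ^ b := by
    intro x y
    rw [hcform]
    simp [Matrix.cons_val_zero, Matrix.cons_val_one, Matrix.head_cons]
  have hδδ : δ * δ = 1 := by
    have h11 := congrArg (eval ![(1 : ℂ), 1]) hprod
    rw [map_mul, eval_rev M c hcbound 1 1 one_ne_zero one_ne_zero, inv_one,
      hevalc 1 1] at h11
    simp only [one_pow, mul_one, one_mul, map_mul, map_pow, eval_X, Matrix.cons_val_zero,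
      Matrix.cons_val_one, Matrix.head_cons] at h11
    linear_combination h11
  refine ⟨δ, (a : ℤ) - N, (b : ℤ) - N, mul_self_eq_one_iff.mp hδδ, ?_⟩
  intro x y
  have hx : (x : ℂ) ≠ 0 := Units.ne_zero x
  have hy : (y : ℂ) ≠ 0 := Units.ne_zero y
  rw [Units.val_inv_eq_inv_val, Units.val_inv_eq_inv_val]
  have e1 : eval ![(x : ℂ), (y : ℂ)] c * eval ![(x : ℂ), (y : ℂ)] P
      = (x : ℂ) ^ N * (y : ℂ) ^ N * eval ![((x : ℂ))⁻¹, ((y : ℂ))⁻¹] P := by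
    have := hQeval x y hx hy; rw [← hc, map_mul] at this; exact this
  rw [hevalc] at e1
  rw [zpow_sub₀ hx, zpow_sub₀ hy, zpow_natCast, zpow_natCast, zpow_natCast, zpow_natCast]
  have hxN : (x : ℂ) ^ N ≠ 0 := pow_ne_zero _ hx
  have hyN : (y : ℂ) ^ N ≠ 0 := pow_ne_zero _ hy
  apply mul_left_cancel₀ (mul_ne_zero hxN hyN)
  rw [← mul_assoc, ← mul_assoc]
  rw [← e1]
  field_simp
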